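/- The combinatorial identity Σ_k C(2K−2J, K−J+k−m) C(2J, J+m) / C(2K, K+k) · ((2J+1)/(2K+1)) = 1 for each fixed m with −J ≤ m ≤ J and J ≤ K, i.e., the diagonal outputs of the universal cloning channel on |J,m⟩⟨J,m| form a probability distribution over k ∈ {−K, ..., K}. -/

import Mathlib

/-- Dual Vandermonde / hockey-stick convolution:
`∑_{k=0}^{N} C(k,a) C(N-k,b) = C(N+1, a+b+1)`. -/
lemma choose_conv : ∀ (N a b : ℕ),
    ∑ k ∈ Finset.range (N+1), (k.choose a) * ((N-k).choose b) = (N+1).choose (a+b+1) := by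
  intro N
  induction N with
  | zero =>
    intro a b
    cases a with
    | zero => simp [Nat.choose_succ_succ]
    | succ a =>
      simp [Nat.choose_eq_zero_of_lt (show (1:ℕ) < a+1+b+1 by omega)]
  | succ N ih =>
    intro a b
    rw [Finset.sum_range_succ']
    simp only [Nat.succ_sub_succ, Nat.sub_zero]
    cases a with
    | zero =>
      have h := ih 0 b
      simp only [Nat.choose_zero_right, one_mul] at h ⊢
      rw [h]
      have e2 : (0:ℕ)+b+1 = b+1 := by omega
      rw [e2, Nat.choose_succ_succ' (N+1) b]
      omega
    | succ a =>
      have h1 := ih a b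
      have h2 := ih (a+1) b
      have e : ∀ k ∈ Finset.range (N+1), (k+1).choose (a+1) * ((N-k).choose b)
           = k.choose a * ((N-k).choose b) + k.choose (a+1) * ((N-k).choose b) := by
        intro k _; rw [Nat.choose_succ_succ, add_mul]
      rw [Finset.sum_congr rfl e, Finset.sum_add_distrib, h1, h2]
      have e2 : a+1+b+1 = (a+b+1)+1 := by omega
      rw [e2, Nat.choose_succ_succ (N+1) (a+b+1)]
      simp [Nat.choose_eq_zero_of_lt (show 0 < a+1 by omega)]

open Nat in
/-- Per-term factorial identity used to rewrite each summand of the cloning channel. -/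
lemma key (a c j d : ℕ) :
    ((a+c+1 : ℝ)/(a+c+(j+d)+1)) * ((j+d).choose j : ℝ) * ((a+c).choose a : ℝ)
        / ((a+c+(j+d)).choose (a+j) : ℝ)
  = (((a+j).choose a : ℝ) * ((c+d).choose c : ℝ)) / ((a+c+(j+d)+1).choose (a+c+1) : ℝ) := by
  have fne : ∀ n : ℕ, (n ! : ℝ) ≠ 0 := fun n => Nat.cast_ne_zero.2 (Nat.factorial_ne_zero n)
  have e1 : ((j+d).choose j : ℝ) = (j+d)! / (j ! * d !) := by
    rw [Nat.cast_choose ℝ (Nat.le_add_right _ _), Nat.add_sub_cancel_left]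
  have e2 : ((a+c).choose a : ℝ) = (a+c)! / (a ! * c !) := by
    rw [Nat.cast_choose ℝ (Nat.le_add_right _ _), Nat.add_sub_cancel_left]
  have s3 : a+c+(j+d) - (a+j) = c + d := by omega
  have e3 : ((a+c+(j+d)).choose (a+j) : ℝ) = (a+c+(j+d))! / ((a+j)! * (c+d)!) := by
    rw [Nat.cast_choose ℝ (by omega), s3]
  have e4 : ((a+j).choose a : ℝ) = (a+j)! / (a ! * j !) := by
    rw [Nat.cast_choose ℝ (Nat.le_add_right _ _), Nat.add_sub_cancel_left]
  have e5 : ((c+d).choose c : ℝ) = (c+d)! / (c ! * d !) := by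
    rw [Nat.cast_choose ℝ (Nat.le_add_right _ _), Nat.add_sub_cancel_left]
  have s6 : a+c+(j+d)+1 - (a+c+1) = j + d := by omega
  have e6 : ((a+c+(j+d)+1).choose (a+c+1) : ℝ) = (a+c+(j+d)+1)! / ((a+c+1)! * (j+d)!) := by
    rw [Nat.cast_choose ℝ (by omega), s6]
  rw [e1, e2, e3, e4, e5, e6, Nat.factorial_succ (a+c+(j+d)), Nat.factorial_succ (a+c)]
  have hne : ((a:ℝ)+c+(j+d)+1) ≠ 0 := by positivity
  have hne2 : ((a:ℝ)+c+1) ≠ 0 := by positivity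
  field_simp
  push_cast
  ring

/-- Diagonal matrix element of the universal cloning channel `C_{J→K}` (for `J ≤ K`) on
`|J,m⟩⟨J,m|`, with natural indices `a = J + m ∈ {0,…,2J}`, `k' = K + k ∈ {0,…,2K}`:
`((2J+1)/(2K+1)) C(2K-2J, K-J+k-m) C(2J, J+m) / C(2K, K+k)`. -/
noncomputable def cloneDiag (J K a k' : ℕ) : ℝ :=
  ((2*J+1 : ℝ)/(2*K+1)) *
    (if a ≤ k' then ((2*K-2*J).choose (k'-a) : ℝ) else 0) *
    ((2*J).choose a : ℝ) / ((2*K).choose k' : ℝ)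

/-- Trace preservation of the universal cloning channel: for fixed `m` (`a = J+m`),
the diagonal outputs of `C_{J→K}(|J,m⟩⟨J,m|)` form a probability distribution over
`k ∈ {-K,…,K}`:  `∑_k ((2J+1)/(2K+1)) C(2K-2J, K-J+k-m) C(2J, J+m) / C(2K, K+k) = 1`. -/
theorem cloning_diagonal_sum_one (J K a : ℕ) (hJK : J ≤ K) (ha : a ≤ 2*J) :
    ∑ k' ∈ Finset.range (2*K+1), cloneDiag J K a k' = 1 := by
  obtain ⟨c, hc⟩ := Nat.exists_eq_add_of_le ha
  obtain ⟨n, hn⟩ := Nat.exists_eq_add_of_le (show a + c ≤ 2*K by omega)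
  have hJR : (2*(J:ℝ)+1) = ((a:ℝ)+c+1) := by exact_mod_cast congrArg (fun x : ℕ => (x:ℝ)+1) hc
  have hKR : (2*(K:ℝ)+1) = ((a:ℝ)+c+n+1) := by
    have : ((2*K : ℕ) : ℝ) = ((a+c+n : ℕ) : ℝ) := by exact_mod_cast congrArg (fun x : ℕ => (x:ℝ)) hn
    push_cast at this; linarith
  have hterm : ∀ k' ∈ Finset.range (2*K+1), cloneDiag J K a k'
      = ((k'.choose a : ℝ) * (((a+c+n-k').choose c : ℕ) : ℝ)) / (((a+c+n+1).choose (a+c+1) : ℕ) : ℝ) := by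
    intro k' hk'
    simp only [Finset.mem_range] at hk'
    unfold cloneDiag
    rw [hJR, hKR, show 2*K-2*J = n by omega, show 2*J = a+c from hc, show 2*K = a+c+n from hn]
    by_cases hka : a ≤ k'
    · rw [if_pos hka]
      obtain ⟨j, hj⟩ := Nat.exists_eq_add_of_le hka
      by_cases hjn : j ≤ n
      · obtain ⟨d, hd⟩ := Nat.exists_eq_add_of_le hjn
        have kk := key a c j d
        rw [show k' - a = j by omega, hj, hd, show a+c+(j+d)-(a+j) = c+d by omega]
        push_cast at kk ⊢
        convert kk using 2
      · rw [Nat.choose_eq_zero_of_lt (show n < k'-a by omega),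
            Nat.choose_eq_zero_of_lt (show a+c+n-k' < c by omega)]
        simp
    · rw [if_neg hka, Nat.choose_eq_zero_of_lt (show k' < a by omega)]
      simp
  rw [Finset.sum_congr rfl hterm, ← Finset.sum_div]
  have hs := choose_conv (a+c+n) a c
  have hsum : (∑ k' ∈ Finset.range (2*K+1), ((k'.choose a : ℝ) * (((a+c+n-k').choose c : ℕ) : ℝ)))
      = (((a+c+n+1).choose (a+c+1) : ℕ) : ℝ) := by
    rw [show 2*K+1 = a+c+n+1 by omega]
    exact_mod_cast congrArg (fun x : ℕ => (x:ℝ)) hs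
  rw [hsum]
  exact div_self (Nat.cast_ne_zero.2 (Nat.choose_pos (by omega)).ne')
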